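/- arXiv:1605.08490 — 2 statements merged into one kernel-verified Lean document; each statement's English description precedes it below -/
import Mathlib

section
/- Let R ⊆ V with vol(R) ≤ vol(V\R), δ ≥ 0, ε = vol(R)/vol(V\R) + δ, and α > 0. If for some nonempty S ⊆ V with S ≠ V the quantity α·vol(R) + ∂S − α·vol(R∩S) + α·ε·vol((V\R)∩S) is strictly less than α·vol(R), then the conductance φ(S) = ∂S / min(vol(S), vol(V\S)) is strictly less than α. -/
open Finset

variable {V : Type*} [Fintype V] [DecidableEq V]

/-- volume of a vertex set: sum of degrees -/
def vol (G : SimpleGraph V) [DecidableRel G.Adj] (S : Finset V) : ℝ :=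
  ∑ v ∈ S, (G.degree v : ℝ)

/-- number of edges between two (disjoint) vertex sets -/
def cutB (G : SimpleGraph V) [DecidableRel G.Adj] (A B : Finset V) : ℝ :=
  (((A ×ˢ B).filter fun p => G.Adj p.1 p.2).card : ℝ)

/-- boundary of S: number of edges from S to its complement -/
def bdry (G : SimpleGraph V) [DecidableRel G.Adj] (S : Finset V) : ℝ :=
  cutB G S Sᶜ

lemma vol_nonneg (G : SimpleGraph V) [DecidableRel G.Adj] (S : Finset V) :
    0 ≤ vol G S :=
  Finset.sum_nonneg fun _ _ => by positivity

lemma vol_mono (G : SimpleGraph V) [DecidableRel G.Adj] {A B : Finset V} (h : A ⊆ B) :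
    vol G A ≤ vol G B :=
  Finset.sum_le_sum_of_subset_of_nonneg h fun _ _ _ => by positivity

lemma vol_part (G : SimpleGraph V) [DecidableRel G.Adj] (A S : Finset V) :
    vol G (A ∩ S) + vol G (A ∩ Sᶜ) = vol G A := by
  have h : A ∩ Sᶜ = A \ S := by
    ext x; simp [Finset.mem_sdiff]
  rw [h]
  exact Finset.sum_inter_add_sum_sdiff A S _

theorem cut_lt_implies_conductance_lt (G : SimpleGraph V) [DecidableRel G.Adj]
    (R S : Finset V) (α δ : ℝ) (hα : 0 < α) (hδ : 0 ≤ δ)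
    (hR : vol G R ≤ vol G Rᶜ)
    (hS : S.Nonempty) (hSne : S ≠ Finset.univ)
    (hvS : 0 < vol G S) (hvSc : 0 < vol G Sᶜ)
    (hcut : α * vol G R + bdry G S - α * vol G (R ∩ S)
        + α * (vol G R / vol G Rᶜ + δ) * vol G (Rᶜ ∩ S) < α * vol G R) :
    bdry G S / min (vol G S) (vol G Sᶜ) < α := by
  have hmin : 0 < min (vol G S) (vol G Sᶜ) := lt_min hvS hvSc
  rw [div_lt_iff₀ hmin]
  have hRn := vol_nonneg G R
  have hRcn := vol_nonneg G Rᶜ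
  have hRS : vol G (R ∩ S) ≤ vol G S := vol_mono G (Finset.inter_subset_right)
  have hRcSn := vol_nonneg G (Rᶜ ∩ S)
  have hRSc := vol_nonneg G (R ∩ Sᶜ)
  have hdivn : 0 ≤ vol G R / vol G Rᶜ := div_nonneg hRn hRcn
  -- from hcut
  have hkey : bdry G S < α * vol G (R ∩ S)
      - α * (vol G R / vol G Rᶜ + δ) * vol G (Rᶜ ∩ S) := by linarith
  have h1 : bdry G S < α * vol G S := by
    have : α * (vol G R / vol G Rᶜ + δ) * vol G (Rᶜ ∩ S) ≥ 0 := by positivity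
    nlinarith
  have h2 : bdry G S < α * vol G Sᶜ := by
    have hpartR := vol_part G R S
    have hpartRc := vol_part G Rᶜ S
    have hpartSc : vol G (R ∩ Sᶜ) + vol G (Rᶜ ∩ Sᶜ) = vol G Sᶜ := by
      have h : Rᶜ ∩ Sᶜ = Sᶜ \ R := by ext x; simp [Finset.mem_sdiff]; tauto
      have h2 : R ∩ Sᶜ = Sᶜ ∩ R := by rw [Finset.inter_comm]
      rw [h, h2]
      exact Finset.sum_inter_add_sum_sdiff Sᶜ R _
    have hRcScn := vol_nonneg G (Rᶜ ∩ Sᶜ)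
    rcases eq_or_lt_of_le hRcn with hz | hpos
    · -- vol Rᶜ = 0
      have hR0 : vol G R = 0 := le_antisymm (by linarith) hRn
      have h0 : vol G (R ∩ S) = 0 :=
        le_antisymm (by
          have := vol_mono (A := R ∩ S) (B := R) G Finset.inter_subset_left; linarith)
          (vol_nonneg _ _)
      nlinarith
    · have hratio : vol G R / vol G Rᶜ ≤ 1 := (div_le_one hpos).2 hR
      have hmul : vol G R / vol G Rᶜ * vol G Rᶜ = vol G R := div_mul_cancel₀ _ (ne_of_gt hpos)
      -- vol(R∩S) - (volR/volRᶜ) vol(Rᶜ∩S) = (volR/volRᶜ) vol(Rᶜ∩Sᶜ) - vol(R∩Sᶜ)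
      have e1 : vol G R / vol G Rᶜ * vol G (Rᶜ ∩ S)
          = vol G R - vol G R / vol G Rᶜ * vol G (Rᶜ ∩ Sᶜ) := by
        have h' : vol G (Rᶜ ∩ S) = vol G Rᶜ - vol G (Rᶜ ∩ Sᶜ) := by linarith
        rw [h', mul_sub, hmul]
      have e2 : vol G R / vol G Rᶜ * vol G (Rᶜ ∩ Sᶜ) ≤ vol G (Rᶜ ∩ Sᶜ) := by
        nlinarith
      have e3 : vol G (R ∩ S) - vol G R / vol G Rᶜ * vol G (Rᶜ ∩ S) ≤ vol G Sᶜ := by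
        linarith
      nlinarith [mul_le_mul_of_nonneg_left e3 hα.le,
        mul_nonneg (mul_nonneg hα.le hδ) hRcSn]
  rcases min_cases (vol G S) (vol G Sᶜ) with ⟨h, _⟩ | ⟨h, _⟩ <;> rw [h]
  · linarith
  · linarith
end

section
/- Let R ⊆ V with vol(R) ≤ vol(V\R), δ ≥ 0, ε = vol(R)/vol(V\R) + δ. Let S* minimize φ̄_R(S) = ∂S/(vol(R∩S) − ε·vol((V\R)∩S)) over sets with positive denominator. Then for every set C satisfying vol(R∩C)/vol(C) ≥ vol(R)/vol(V) + γ·vol(V\R)/vol(V) for some γ > δ (with vol(C) ≤ vol(V\C)), it holds that φ(S*) ≤ (1/(γ−δ))·φ(C). -/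
open Finset

variable {V : Type*} [Fintype V] [DecidableEq V]

lemma bdry_nonneg (G : SimpleGraph V) [DecidableRel G.Adj] (S : Finset V) : 0 ≤ bdry G S :=
  Nat.cast_nonneg _

lemma vol_split (G : SimpleGraph V) [DecidableRel G.Adj] (R S : Finset V) :
    vol G (R ∩ S) + vol G (Rᶜ ∩ S) = vol G S := by
  unfold vol
  rw [inter_comm R S, inter_comm Rᶜ S]
  rw [show S ∩ Rᶜ = S \ R by ext x; simp [Finset.mem_sdiff]]
  exact Finset.sum_inter_add_sum_sdiff S R _

lemma vol_univ_split (G : SimpleGraph V) [DecidableRel G.Adj] (R : Finset V) :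
    vol G R + vol G Rᶜ = vol G Finset.univ := by
  unfold vol
  exact Finset.sum_add_sum_compl R _

theorem cut_quality_guarantee (G : SimpleGraph V) [DecidableRel G.Adj]
    (R Sstar : Finset V) (δ ε : ℝ) (hδ : 0 ≤ δ) (hR : vol G R ≤ vol G Rᶜ)
    (hRc : 0 < vol G Rᶜ)
    (hε : ε = vol G R / vol G Rᶜ + δ)
    (hdenom : 0 < vol G (R ∩ Sstar) - ε * vol G (Rᶜ ∩ Sstar))
    (hmin : ∀ S : Finset V,
      0 < vol G (R ∩ S) - ε * vol G (Rᶜ ∩ S) →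
      bdry G Sstar / (vol G (R ∩ Sstar) - ε * vol G (Rᶜ ∩ Sstar))
        ≤ bdry G S / (vol G (R ∩ S) - ε * vol G (Rᶜ ∩ S))) :
    ∀ (C : Finset V) (γ : ℝ), δ < γ → 0 < vol G C → vol G C ≤ vol G Cᶜ →
      vol G (R ∩ C) / vol G C
          ≥ vol G R / vol G Finset.univ + γ * (vol G Rᶜ / vol G Finset.univ) →
      bdry G Sstar / min (vol G Sstar) (vol G Sstarᶜ)
        ≤ (1 / (γ - δ)) * (bdry G C / min (vol G C) (vol G Cᶜ)) := by
  intro C γ hγ hC hCmin hq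
  have hεR : ε * vol G Rᶜ = vol G R + δ * vol G Rᶜ := by
    rw [hε]; field_simp
  have hV : 0 < vol G Finset.univ := by
    have := vol_nonneg G R
    nlinarith [vol_univ_split G R]
  -- Step A: denominator of C is at least (γ - δ) * vol C
  have hsplitC := vol_split G R C
  have hRcC : 0 ≤ vol G (Rᶜ ∩ C) := vol_nonneg _ _
  have hRcC' : vol G (Rᶜ ∩ C) ≤ vol G C := by linarith [vol_nonneg G (R ∩ C)]
  have hq' : vol G (R ∩ C) * vol G Finset.univ
      ≥ (vol G R + γ * vol G Rᶜ) * vol G C := by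
    have hkey : vol G R / vol G Finset.univ + γ * (vol G Rᶜ / vol G Finset.univ)
        = (vol G R + γ * vol G Rᶜ) / vol G Finset.univ := by ring
    rw [hkey] at hq
    have := (div_le_div_iff₀ hV hC).mp hq
    linarith
  have hdC : (γ - δ) * vol G C ≤ vol G (R ∩ C) - ε * vol G (Rᶜ ∩ C) := by
    have huniv := vol_univ_split G R
    have h1 : vol G (R ∩ C) * vol G Rᶜ
        ≥ vol G R * vol G (Rᶜ ∩ C) + γ * vol G Rᶜ * vol G C := by
      nlinarith [vol_mono G (inter_subset_left : R ∩ C ⊆ R)]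
    have h2 : (vol G (R ∩ C) - ε * vol G (Rᶜ ∩ C)) * vol G Rᶜ
        = vol G (R ∩ C) * vol G Rᶜ - (vol G R + δ * vol G Rᶜ) * vol G (Rᶜ ∩ C) := by
      rw [hε]; field_simp
    have h3 : (γ - δ) * vol G C * vol G Rᶜ
        ≤ (vol G (R ∩ C) - ε * vol G (Rᶜ ∩ C)) * vol G Rᶜ := by
      rw [h2]
      nlinarith [mul_nonneg (mul_nonneg hδ hRc.le) (sub_nonneg.mpr hRcC')]
    exact le_of_mul_le_mul_right h3 hRc
  have hdCpos : 0 < vol G (R ∩ C) - ε * vol G (Rᶜ ∩ C) :=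
    lt_of_lt_of_le (mul_pos (sub_pos.mpr hγ) hC) hdC
  -- Step B: denominator of Sstar is ≤ min vol
  have hsplitS := vol_split G R Sstar
  have hsplitSc := vol_split G R Sstarᶜ
  have hεnn : 0 ≤ ε := by
    rw [hε]; exact add_nonneg (div_nonneg (vol_nonneg G R) hRc.le) hδ
  have hdS1 : vol G (R ∩ Sstar) - ε * vol G (Rᶜ ∩ Sstar) ≤ vol G Sstar := by
    nlinarith [vol_nonneg G (Rᶜ ∩ Sstar), vol_nonneg G (R ∩ Sstar),
      vol_mono G (inter_subset_right : R ∩ Sstar ⊆ Sstar)]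
  have hdS2 : vol G (R ∩ Sstar) - ε * vol G (Rᶜ ∩ Sstar) ≤ vol G Sstarᶜ := by
    have hRsplit : vol G (Rᶜ ∩ Sstar) + vol G (Rᶜ ∩ Sstarᶜ) = vol G Rᶜ := by
      have h := vol_split G Sstar Rᶜ
      rwa [inter_comm Sstar Rᶜ, inter_comm Sstarᶜ Rᶜ] at h
    have hRsplit2 : vol G (R ∩ Sstar) + vol G (R ∩ Sstarᶜ) = vol G R := by
      have h := vol_split G Sstar R
      rwa [inter_comm Sstar R, inter_comm Sstarᶜ R] at h
    have h1 : (vol G (R ∩ Sstar) - ε * vol G (Rᶜ ∩ Sstar)) * vol G Rᶜ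
        ≤ vol G Sstarᶜ * vol G Rᶜ := by
      have h2 : (vol G (R ∩ Sstar) - ε * vol G (Rᶜ ∩ Sstar)) * vol G Rᶜ
          = vol G (R ∩ Sstar) * vol G Rᶜ
            - (vol G R + δ * vol G Rᶜ) * vol G (Rᶜ ∩ Sstar) := by
        rw [hε]; field_simp
      have e1 : vol G (R ∩ Sstar) * vol G Rᶜ
            - (vol G R + δ * vol G Rᶜ) * vol G (Rᶜ ∩ Sstar)
          = vol G (R ∩ Sstar) * vol G (Rᶜ ∩ Sstarᶜ)
            - vol G (R ∩ Sstarᶜ) * vol G (Rᶜ ∩ Sstar)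
            - δ * vol G Rᶜ * vol G (Rᶜ ∩ Sstar) := by
        linear_combination (-(vol G (R ∩ Sstar))) * hRsplit
          + (vol G (Rᶜ ∩ Sstar)) * hRsplit2
      have key : vol G (R ∩ Sstar) * vol G (Rᶜ ∩ Sstarᶜ) ≤ vol G Rᶜ * vol G Sstarᶜ :=
        mul_le_mul (le_trans (vol_mono G (inter_subset_left : R ∩ Sstar ⊆ R)) hR)
          (vol_mono G (inter_subset_right : Rᶜ ∩ Sstarᶜ ⊆ Sstarᶜ))
          (vol_nonneg _ _) hRc.le
      rw [h2, e1]
      nlinarith [mul_nonneg (vol_nonneg G (R ∩ Sstarᶜ)) (vol_nonneg G (Rᶜ ∩ Sstar)),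
        mul_nonneg (mul_nonneg hδ hRc.le) (vol_nonneg G (Rᶜ ∩ Sstar))]
    exact le_of_mul_le_mul_right h1 hRc
  have hminS : vol G (R ∩ Sstar) - ε * vol G (Rᶜ ∩ Sstar)
      ≤ min (vol G Sstar) (vol G Sstarᶜ) := le_min hdS1 hdS2
  have hbS := bdry_nonneg G Sstar
  have hbC := bdry_nonneg G C
  calc bdry G Sstar / min (vol G Sstar) (vol G Sstarᶜ)
      ≤ bdry G Sstar / (vol G (R ∩ Sstar) - ε * vol G (Rᶜ ∩ Sstar)) := by
        gcongr
    _ ≤ bdry G C / (vol G (R ∩ C) - ε * vol G (Rᶜ ∩ C)) := hmin C hdCpos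
    _ ≤ bdry G C / ((γ - δ) * vol G C) := by
        gcongr
    _ = (1 / (γ - δ)) * (bdry G C / min (vol G C) (vol G Cᶜ)) := by
        rw [min_eq_left hCmin]
        field_simp
end
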